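/- arXiv:2412.03245 — 3 statements merged into one kernel-verified Lean document; each statement's English description precedes it below -/
import Mathlib

section
/- Fix n ∈ ℕ, n ≥ 1, and let 𝒜₀ⁿ = {f ∈ H^∞ : f(0) = f′(0) = ⋯ = f^{(n−1)}(0) = 0}. A map T : 𝒜₀ⁿ → 𝒜₀ⁿ is an algebra automorphism (bijective, ℂ-linear and multiplicative) if and only if there exists θ ∈ ℝ such that T f = f ∘ (z ↦ e^{iθ}z) for all f ∈ 𝒜₀ⁿ. -/
open Complex Metric Set

local notation "𝔻" => Complex.UnitDisc

/-- The closed unit disc, as a subset of `ℂ`. -/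
def cD : Set ℂ := Metric.closedBall 0 1

/-- A function on the open unit disc is analytic (holomorphic):
it is the restriction of a function differentiable on the open unit ball. -/
def HolOn (f : 𝔻 → ℂ) : Prop :=
  ∃ F : ℂ → ℂ, DifferentiableOn ℂ F (Metric.ball 0 1) ∧ ∀ z : 𝔻, F ↑z = f z

/-- Membership in `H^∞`, the algebra of bounded analytic functions on the unit disc. -/
def MemHinf (f : 𝔻 → ℂ) : Prop :=
  HolOn f ∧ ∃ M : ℝ, ∀ z : 𝔻, ‖f z‖ ≤ M

/-- Membership in the disc algebra `A(𝔻)`: continuous on the closed unit disc,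
analytic in its interior. -/
def MemDiscAlg (f : ↥cD → ℂ) : Prop :=
  ∃ F : ℂ → ℂ, ContinuousOn F cD ∧ DifferentiableOn ℂ F (Metric.ball 0 1) ∧
    ∀ z : ↥cD, F ↑z = f z

/-- `φ ∈ Aut(𝔻)`: a bijective analytic self-map of the unit disc. -/
def IsDiscAut (φ : 𝔻 → 𝔻) : Prop :=
  (∃ F : ℂ → ℂ, DifferentiableOn ℂ F (Metric.ball 0 1) ∧ ∀ z : 𝔻, F ↑z = ↑(φ z)) ∧
  Function.Bijective φ

/-- A Möbius automorphism of the unit disc, given by its global formula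
`Φ z = η (a - z) / (1 - conj a * z)` with `|a| < 1`, `|η| = 1`; this is the analytic
extension to (a neighbourhood of) the closed unit disc of a disc automorphism. -/
def IsMobius (Φ : ℂ → ℂ) : Prop :=
  ∃ a η : ℂ, ‖a‖ < 1 ∧ ‖η‖ = 1 ∧
    ∀ z : ℂ, Φ z = η * (a - z) / (1 - (starRingEnd ℂ) a * z)

/-- `T` is an algebra automorphism of the set `A` of complex-valued functions:
a bijective, `ℂ`-linear and multiplicative self-map of `A`. -/
def IsAlgAutOn {ι : Type} (A : Set (ι → ℂ)) (T : (ι → ℂ) → (ι → ℂ)) : Prop :=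
  (∀ f ∈ A, T f ∈ A) ∧
  (∀ f ∈ A, ∀ g ∈ A, T (f + g) = T f + T g) ∧
  (∀ (c : ℂ), ∀ f ∈ A, T (c • f) = c • T f) ∧
  (∀ f ∈ A, ∀ g ∈ A, T (f * g) = T f * T g) ∧
  Set.InjOn T A ∧ Set.SurjOn T A A

/-- The subalgebra `ψ H^∞ = {ψ · g : g ∈ H^∞}`. -/
def psiH (ψ : 𝔻 → ℂ) : Set (𝔻 → ℂ) :=
  {f | ∃ g, MemHinf g ∧ f = fun z => ψ z * g z}

/-- The subalgebra `ψ A(𝔻) = {ψ · g : g ∈ A(𝔻)}`. -/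
def psiA (ψ : ↥cD → ℂ) : Set (↥cD → ℂ) :=
  {f | ∃ g, MemDiscAlg g ∧ f = fun z => ψ z * g z}

/-- The composition operator `C_φ : f ↦ f ∘ φ` is a well-defined algebra automorphism
of the set `A` (it is automatically linear and multiplicative). -/
def CompAutOn (A : Set (𝔻 → ℂ)) (φ : 𝔻 → 𝔻) : Prop :=
  (∀ f ∈ A, f ∘ φ ∈ A) ∧ Set.InjOn (fun f => f ∘ φ) A ∧ Set.SurjOn (fun f => f ∘ φ) A A

/-- The Möbius factor `τ_a(z) = (a - z)/(1 - conj a · z)`. -/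
noncomputable def mobius (a z : ℂ) : ℂ := (a - z) / (1 - (starRingEnd ℂ) a * z)

/-- `f` has a zero of order (multiplicity) `k` at `w`:
`f z = (z - w)^k g z` with `g` analytic and `g w ≠ 0`. -/
def ZeroOrderAt (f : 𝔻 → ℂ) (w : 𝔻) (k : ℕ) : Prop :=
  ∃ g : 𝔻 → ℂ, HolOn g ∧ g w ≠ 0 ∧ ∀ z : 𝔻, f z = ((z : ℂ) - (w : ℂ)) ^ k * g z

/-- `g` is an invertible element of `H^∞`. -/
def InvHinf (g : 𝔻 → ℂ) : Prop :=
  MemHinf g ∧ ∃ h : 𝔻 → ℂ, MemHinf h ∧ ∀ z, g z * h z = 1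

/-- `g` is an invertible element of the disc algebra `A(𝔻)`. -/
def InvDiscAlg (g : ↥cD → ℂ) : Prop :=
  MemDiscAlg g ∧ ∃ h : ↥cD → ℂ, MemDiscAlg h ∧ ∀ z, g z * h z = 1

/-- The subalgebra `𝒜₀ⁿ = {f ∈ H^∞ : f(0) = f'(0) = ⋯ = f^{(n-1)}(0) = 0}`. -/
def calAn (n : ℕ) : Set (𝔻 → ℂ) :=
  {f | MemHinf f ∧ ∃ F : ℂ → ℂ, DifferentiableOn ℂ F (Metric.ball 0 1) ∧
    (∀ z : 𝔻, F ↑z = f z) ∧ ∀ k < n, iteratedDeriv k F 0 = 0}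

noncomputable section
namespace Stmt3Aux
open Filter Topology

/-! ### Analytic auxiliary lemmas -/

lemma diffOn_dslope {F : ℂ → ℂ} (hF : DifferentiableOn ℂ F (ball (0:ℂ) 1)) :
    DifferentiableOn ℂ (dslope F 0) (ball (0:ℂ) 1) := by
  intro x hx
  rcases eq_or_ne x 0 with rfl | hx0
  · obtain ⟨p, hp⟩ := (hF.analyticOnNhd isOpen_ball) 0 (by simp)
    exact hp.has_fpower_series_dslope_fslope.differentiableAt.differentiableWithinAt
  · exact (differentiableWithinAt_dslope_of_ne hx0).2 (hF x hx)

lemma analyticOnNhd_iteratedDeriv {U : Set ℂ} (hU : IsOpen U) {g : ℂ → ℂ}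
    (hg : AnalyticOnNhd ℂ g U) (m : ℕ) : AnalyticOnNhd ℂ (iteratedDeriv m g) U := by
  induction m with
  | zero => simpa using hg
  | succ m ih => rw [iteratedDeriv_succ]; exact ih.deriv_of_isOpen hU

lemma iteratedDeriv_id_mul {U : Set ℂ} (hU : IsOpen U) {g : ℂ → ℂ}
    (hg : AnalyticOnNhd ℂ g U) (k : ℕ) :
    ∀ x ∈ U, iteratedDeriv k (fun z => z * g z) x
      = x * iteratedDeriv k g x + (k : ℂ) * iteratedDeriv (k-1) g x := by
  induction k with
  | zero => intro x hx; simp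
  | succ k ih =>
    intro x hx
    have hgk := analyticOnNhd_iteratedDeriv hU hg k
    have hgk1 := analyticOnNhd_iteratedDeriv hU hg (k-1)
    have hev : iteratedDeriv k (fun z => z * g z) =ᶠ[nhds x]
        (fun z => z * iteratedDeriv k g z + (k:ℂ) * iteratedDeriv (k-1) g z) :=
      Filter.eventuallyEq_of_mem (hU.mem_nhds hx) (fun z hz => ih z hz)
    rw [iteratedDeriv_succ, hev.deriv_eq]
    have d1 : DifferentiableAt ℂ (iteratedDeriv k g) x := (hgk x hx).differentiableAt
    have d2 : DifferentiableAt ℂ (iteratedDeriv (k-1) g) x := (hgk1 x hx).differentiableAt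
    rw [deriv_fun_add (f := fun z => z * iteratedDeriv k g z) (differentiableAt_fun_id.mul d1) (d2.const_mul _),
      deriv_fun_mul differentiableAt_fun_id d1, deriv_const_mul _ d2, deriv_id'']
    rw [← iteratedDeriv_succ]
    rcases Nat.eq_zero_or_pos k with rfl | hk
    · simp [iteratedDeriv_succ]; ring
    · have h1 : k - 1 + 1 = k := Nat.succ_pred_eq_of_pos hk
      rw [← iteratedDeriv_succ, h1]
      push_cast [Nat.add_sub_cancel]
      ring

lemma iteratedDeriv_zero_of_factor {n : ℕ} {F G : ℂ → ℂ}
    (hG : DifferentiableOn ℂ G (ball (0:ℂ) 1))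
    (hFG : ∀ z ∈ ball (0:ℂ) 1, F z = z ^ n * G z) :
    ∀ k < n, iteratedDeriv k F 0 = 0 := by
  induction n generalizing F G with
  | zero => intro k hk; exact absurd hk (Nat.not_lt_zero k)
  | succ n ih =>
    intro k hk
    have hanG : AnalyticOnNhd ℂ (fun z : ℂ => z ^ n * G z) (ball (0:ℂ) 1) :=
      (((differentiable_pow n).differentiableOn.mul hG).analyticOnNhd isOpen_ball)
    have hev : F =ᶠ[𝓝 (0:ℂ)] fun z => z * (z ^ n * G z) :=
      Filter.eventuallyEq_of_mem (isOpen_ball.mem_nhds (mem_ball_self one_pos))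
        (fun z hz => by rw [hFG z hz]; ring)
    rw [hev.iteratedDeriv_eq k,
      iteratedDeriv_id_mul isOpen_ball hanG k 0 (by simp), zero_mul, zero_add]
    rcases Nat.eq_zero_or_pos k with rfl | hkpos
    · simp
    · rw [ih hG (fun z _ => rfl) (k-1) (by omega), mul_zero]

lemma exists_factor {n : ℕ} {F : ℂ → ℂ} (hF : DifferentiableOn ℂ F (ball (0:ℂ) 1))
    (h0 : ∀ k < n, iteratedDeriv k F 0 = 0) :
    ∃ G, DifferentiableOn ℂ G (ball (0:ℂ) 1) ∧ ∀ z ∈ ball (0:ℂ) 1, F z = z ^ n * G z := by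
  induction n generalizing F with
  | zero => exact ⟨F, hF, fun z _ => by simp⟩
  | succ n ih =>
    have hF0 : F 0 = 0 := by simpa using h0 0 (Nat.succ_pos n)
    have hdG1 : DifferentiableOn ℂ (dslope F 0) (ball (0:ℂ) 1) := diffOn_dslope hF
    have hfac : ∀ z : ℂ, F z = z * dslope F 0 z := fun z => by
      have h := sub_smul_dslope F 0 z
      rw [hF0, sub_zero, sub_zero, smul_eq_mul] at h
      exact h.symm
    have hder : ∀ k < n, iteratedDeriv k (dslope F 0) 0 = 0 := by
      intro k hk
      have hanG1 : AnalyticOnNhd ℂ (dslope F 0) (ball (0:ℂ) 1) :=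
        hdG1.analyticOnNhd isOpen_ball
      have hFe : iteratedDeriv (k+1) F 0 = ((k:ℂ)+1) * iteratedDeriv k (dslope F 0) 0 := by
        have hev : F =ᶠ[𝓝 (0:ℂ)] fun z => z * dslope F 0 z := Filter.Eventually.of_forall hfac
        rw [hev.iteratedDeriv_eq (k+1),
          iteratedDeriv_id_mul isOpen_ball hanG1 (k+1) 0 (by simp),
          Nat.add_sub_cancel, zero_mul, zero_add]
        push_cast; ring
      have h00 := h0 (k+1) (by omega)
      rw [h00] at hFe
      have hne : ((k:ℂ)+1) ≠ 0 := by exact_mod_cast Nat.succ_ne_zero k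
      exact (mul_eq_zero.mp hFe.symm).resolve_left hne
    obtain ⟨G, hdG, hfac2⟩ := ih hdG1 hder
    exact ⟨G, hdG, fun z hz => by rw [hfac z, hfac2 z hz]; ring⟩

lemma norm_le_of_sphere_bound {G : ℂ → ℂ} (hG : DifferentiableOn ℂ G (ball (0:ℂ) 1))
    {B : ℝ → ℝ} {a C : ℝ} (ha : 0 ≤ a) (ha1 : a < 1)
    (hB : ∀ r, a < r → r < 1 → ∀ z : ℂ, ‖z‖ = r → ‖G z‖ ≤ B r)
    (hBc : Filter.Tendsto B (𝓝[<] (1:ℝ)) (𝓝 C)) :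
    ∀ z₀ ∈ ball (0:ℂ) 1, ‖G z₀‖ ≤ C := by
  intro z₀ hz₀
  have hz1 : ‖z₀‖ < 1 := mem_ball_zero_iff.mp hz₀
  have key : ∀ r, max a ‖z₀‖ < r → r < 1 → ‖G z₀‖ ≤ B r := by
    intro r hr hr1
    have hra : a < r := lt_of_le_of_lt (le_max_left _ _) hr
    have hrz : ‖z₀‖ < r := lt_of_le_of_lt (le_max_right _ _) hr
    have hr0 : 0 < r := lt_of_le_of_lt ha hra
    refine Complex.norm_le_of_forall_mem_frontier_norm_le
      (Metric.isBounded_ball (x := (0:ℂ)) (r := r)) ⟨hG.mono (ball_subset_ball hr1.le), ?_⟩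
      ?_ ?_
    · rw [closure_ball (0:ℂ) hr0.ne']
      exact hG.continuousOn.mono (closedBall_subset_ball hr1)
    · intro z hzf
      rw [frontier_ball (0:ℂ) hr0.ne'] at hzf
      exact hB r hra hr1 z (by simpa [mem_sphere_zero_iff_norm] using hzf)
    · rw [closure_ball (0:ℂ) hr0.ne']
      exact mem_closedBall_zero_iff.mpr hrz.le
  have hev : ∀ᶠ r in 𝓝[<] (1:ℝ), ‖G z₀‖ ≤ B r := by
    have hmem : Set.Ioo (max a ‖z₀‖) 1 ∈ 𝓝[<] (1:ℝ) :=
      Ioo_mem_nhdsLT_of_mem ⟨max_lt ha1 hz1, le_refl 1⟩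
    filter_upwards [hmem] with r hr
    exact key r hr.1 hr.2
  exact ge_of_tendsto hBc hev

lemma bound_of_pow_factor {n : ℕ} {M : ℝ} {F G : ℂ → ℂ}
    (hG : DifferentiableOn ℂ G (ball (0:ℂ) 1))
    (hFG : ∀ z ∈ ball (0:ℂ) 1, F z = z ^ n * G z)
    (hM : ∀ z ∈ ball (0:ℂ) 1, ‖F z‖ ≤ M) :
    ∀ z ∈ ball (0:ℂ) 1, ‖G z‖ ≤ M := by
  have h0 : (0:ℂ) ∈ ball (0:ℂ) 1 := mem_ball_self one_pos
  have hM0 : 0 ≤ M := le_trans (norm_nonneg _) (hM 0 h0)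
  have hlim : Filter.Tendsto (fun r : ℝ => M / r ^ n) (𝓝[<] (1:ℝ)) (𝓝 M) := by
    have h1 : Filter.Tendsto (fun r : ℝ => r) (𝓝[<] (1:ℝ)) (𝓝 1) :=
      tendsto_id.mono_left nhdsWithin_le_nhds
    have := (tendsto_const_nhds (x := M) (f := 𝓝[<] (1:ℝ))).div (h1.pow n) (by norm_num)
    rw [one_pow, div_one] at this
    exact this
  have := norm_le_of_sphere_bound hG (a := 0) le_rfl one_pos ?_ hlim
  · exact this
  · intro r hr0 hr1 z hz
    have hzball : z ∈ ball (0:ℂ) 1 := mem_ball_zero_iff.mpr (hz ▸ hr1)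
    have hF : ‖F z‖ = r ^ n * ‖G z‖ := by
      rw [hFG z hzball, norm_mul, norm_pow, hz]
    have := hM z hzball
    rw [hF] at this
    rw [le_div_iff₀ (by positivity)]
    linarith [this]

lemma bound_of_linear_factor {w : ℂ} {M : ℝ} {F G : ℂ → ℂ}
    (hG : DifferentiableOn ℂ G (ball (0:ℂ) 1)) (hw : ‖w‖ < 1)
    (hFG : ∀ z ∈ ball (0:ℂ) 1, F z = (z - w) * G z)
    (hM : ∀ z ∈ ball (0:ℂ) 1, ‖F z‖ ≤ M) :
    ∀ z ∈ ball (0:ℂ) 1, ‖G z‖ ≤ M / (1 - ‖w‖) := by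
  have h0 : (0:ℂ) ∈ ball (0:ℂ) 1 := mem_ball_self one_pos
  have hM0 : 0 ≤ M := le_trans (norm_nonneg _) (hM 0 h0)
  have hlim : Filter.Tendsto (fun r : ℝ => M / (r - ‖w‖)) (𝓝[<] (1:ℝ)) (𝓝 (M / (1 - ‖w‖))) := by
    have h1 : Filter.Tendsto (fun r : ℝ => r - ‖w‖) (𝓝[<] (1:ℝ)) (𝓝 (1 - ‖w‖)) :=
      (tendsto_id.mono_left nhdsWithin_le_nhds).sub tendsto_const_nhds
    exact (tendsto_const_nhds (x := M) (f := 𝓝[<] (1:ℝ))).div h1 (by linarith)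
  refine norm_le_of_sphere_bound hG (a := ‖w‖) (norm_nonneg w) hw ?_ hlim
  intro r hrw hr1 z hz
  have hzball : z ∈ ball (0:ℂ) 1 := mem_ball_zero_iff.mpr (hz ▸ hr1)
  have hzw : r - ‖w‖ ≤ ‖z - w‖ := by
    have := norm_sub_norm_le z w
    rw [hz] at this
    linarith
  have hF : ‖F z‖ = ‖z - w‖ * ‖G z‖ := by rw [hFG z hzball, norm_mul]
  have hFM := hM z hzball
  rw [le_div_iff₀ (by linarith)]
  calc ‖G z‖ * (r - ‖w‖) ≤ ‖G z‖ * ‖z - w‖ := by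
        have := norm_nonneg (G z); nlinarith
    _ = ‖F z‖ := by rw [hF, mul_comm]
    _ ≤ M := hFM

/-! ### Unit disc infrastructure -/

lemma coe_mem_ball (z : 𝔻) : (z : ℂ) ∈ ball (0:ℂ) 1 :=
  mem_ball_zero_iff.mpr z.norm_lt_one

def mkD (x : ℂ) (hx : x ∈ ball (0:ℂ) 1) : 𝔻 :=
  Complex.UnitDisc.mk x (mem_ball_zero_iff.mp hx)

@[simp] lemma coe_mkD (x : ℂ) (hx : x ∈ ball (0:ℂ) 1) : ((mkD x hx : 𝔻) : ℂ) = x := rfl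

lemma norm_coe_lt_one (z : 𝔻) : ‖(z:ℂ)‖ < 1 := by
  exact z.norm_lt_one

lemma memHinf_def {f : 𝔻 → ℂ} (F : ℂ → ℂ) (hF : DifferentiableOn ℂ F (ball (0:ℂ) 1))
    (heq : ∀ z : 𝔻, F ↑z = f z) (M : ℝ) (hM : ∀ x ∈ ball (0:ℂ) 1, ‖F x‖ ≤ M) :
    MemHinf f :=
  ⟨⟨F, hF, heq⟩, M, fun z => by rw [← heq z]; exact hM _ (coe_mem_ball z)⟩

/-- From `MemHinf` extract an extension that is moreover globally bounded on the ball. -/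
lemma memHinf_elim {f : 𝔻 → ℂ} (hf : MemHinf f) :
    ∃ F M, DifferentiableOn ℂ F (ball (0:ℂ) 1) ∧ (∀ z : 𝔻, F ↑z = f z) ∧
      ∀ x ∈ ball (0:ℂ) 1, ‖F x‖ ≤ M := by
  obtain ⟨⟨F, hFd, hFeq⟩, M, hM⟩ := hf
  refine ⟨F, M, hFd, hFeq, fun x hx => ?_⟩
  rw [show x = ((mkD x hx : 𝔻) : ℂ) from rfl, hFeq (mkD x hx)]
  exact hM (mkD x hx)

lemma memHinf_add {f g : 𝔻 → ℂ} (hf : MemHinf f) (hg : MemHinf g) : MemHinf (fun z => f z + g z) := by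
  obtain ⟨F, M, hFd, hFeq, hFM⟩ := memHinf_elim hf
  obtain ⟨G, N, hGd, hGeq, hGN⟩ := memHinf_elim hg
  refine memHinf_def (fun x => F x + G x) (hFd.add hGd) (fun z => by simp only [hFeq z, hGeq z]) (M + N)
    (fun x hx => le_trans (norm_add_le _ _) (add_le_add (hFM x hx) (hGN x hx)))

lemma memHinf_mul {f g : 𝔻 → ℂ} (hf : MemHinf f) (hg : MemHinf g) : MemHinf (fun z => f z * g z) := by
  obtain ⟨F, M, hFd, hFeq, hFM⟩ := memHinf_elim hf
  obtain ⟨G, N, hGd, hGeq, hGN⟩ := memHinf_elim hg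
  have hM0 : 0 ≤ M := le_trans (norm_nonneg _) (hFM 0 (mem_ball_self one_pos))
  refine memHinf_def (fun x => F x * G x) (hFd.mul hGd) (fun z => by simp only [hFeq z, hGeq z]) (M * N)
    (fun x hx => ?_)
  rw [norm_mul]
  exact mul_le_mul (hFM x hx) (hGN x hx) (norm_nonneg _) hM0

lemma memHinf_const (c : ℂ) : MemHinf (fun _ => c) :=
  memHinf_def (fun _ => c) (differentiableOn_const c) (fun _ => rfl) ‖c‖
    (fun x _ => le_refl _)

lemma memHinf_smul (c : ℂ) {f : 𝔻 → ℂ} (hf : MemHinf f) : MemHinf (fun z => c * f z) :=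
  memHinf_mul (memHinf_const c) hf

lemma memHinf_monomial (m : ℕ) : MemHinf (fun z : 𝔻 => (z:ℂ) ^ m) := by
  refine memHinf_def (fun x => x ^ m) ((differentiable_pow m).differentiableOn)
    (fun z => rfl) 1 (fun x hx => ?_)
  rw [norm_pow]
  exact pow_le_one₀ (norm_nonneg _) (le_of_lt (mem_ball_zero_iff.mp hx))

/-- The key characterisation: `f ∈ calAn n` iff `f = z^n g` with `g ∈ H^∞`. -/
lemma mem_calAn_iff {n : ℕ} {f : 𝔻 → ℂ} :
    f ∈ calAn n ↔ ∃ g : 𝔻 → ℂ, MemHinf g ∧ ∀ z : 𝔻, f z = (z:ℂ) ^ n * g z := by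
  constructor
  · rintro ⟨hf, F, hFd, hFeq, hder⟩
    obtain ⟨F', M, hF'd, hF'eq, hF'M⟩ := memHinf_elim hf
    have hFF' : ∀ x ∈ ball (0:ℂ) 1, F x = F' x := fun x hx => by
      rw [show x = ((mkD x hx : 𝔻) : ℂ) from rfl, hFeq (mkD x hx), hF'eq (mkD x hx)]
    have hFM : ∀ x ∈ ball (0:ℂ) 1, ‖F x‖ ≤ M := fun x hx => by
      rw [hFF' x hx]; exact hF'M x hx
    obtain ⟨G, hGd, hfac⟩ := exists_factor hFd hder
    have hGM := bound_of_pow_factor hGd hfac hFM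
    refine ⟨fun z => G ↑z, memHinf_def G hGd (fun z => rfl) M hGM, fun z => ?_⟩
    rw [← hFeq z, hfac _ (coe_mem_ball z)]
  · rintro ⟨g, hg, hfac⟩
    obtain ⟨G, M, hGd, hGeq, hGM⟩ := memHinf_elim hg
    have hM0 : 0 ≤ M := le_trans (norm_nonneg _) (hGM 0 (mem_ball_self one_pos))
    have heq : ∀ z : 𝔻, (fun x : ℂ => x ^ n * G x) ↑z = f z := fun z => by
      simp only [hfac z, hGeq z]
    refine ⟨memHinf_def _ (((differentiable_pow n).differentiableOn).mul hGd) heq M ?_,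
      ⟨fun x => x ^ n * G x, ((differentiable_pow n).differentiableOn).mul hGd, heq,
        iteratedDeriv_zero_of_factor hGd (fun z _ => rfl)⟩⟩
    intro x hx
    show ‖x ^ n * G x‖ ≤ M
    rw [norm_mul, norm_pow]
    calc ‖x‖ ^ n * ‖G x‖ ≤ 1 * M := by
          refine mul_le_mul ?_ (hGM x hx) (norm_nonneg _) one_pos.le
          exact pow_le_one₀ (norm_nonneg _) (le_of_lt (mem_ball_zero_iff.mp hx))
      _ = M := one_mul M

lemma calAn_monomial {n m : ℕ} (h : n ≤ m) : (fun z : 𝔻 => (z:ℂ) ^ m) ∈ calAn n := by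
  rw [mem_calAn_iff]
  exact ⟨fun z => (z:ℂ) ^ (m - n), memHinf_monomial _,
    fun z => by rw [← pow_add, Nat.add_sub_cancel' h]⟩

lemma calAn_add {n : ℕ} {f g : 𝔻 → ℂ} (hf : f ∈ calAn n) (hg : g ∈ calAn n) :
    f + g ∈ calAn n := by
  rw [mem_calAn_iff] at *
  obtain ⟨a, ha, hfa⟩ := hf
  obtain ⟨b, hb, hgb⟩ := hg
  exact ⟨fun z => a z + b z, memHinf_add ha hb,
    fun z => by simp only [Pi.add_apply, hfa z, hgb z]; ring⟩

lemma calAn_smul {n : ℕ} (c : ℂ) {f : 𝔻 → ℂ} (hf : f ∈ calAn n) : c • f ∈ calAn n := by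
  rw [mem_calAn_iff] at *
  obtain ⟨a, ha, hfa⟩ := hf
  exact ⟨fun z => c * a z, memHinf_smul c ha,
    fun z => by simp only [Pi.smul_apply, smul_eq_mul, hfa z]; ring⟩

lemma calAn_mul {n : ℕ} {f g : 𝔻 → ℂ} (hf : f ∈ calAn n) (hg : g ∈ calAn n) :
    f * g ∈ calAn n := by
  rw [mem_calAn_iff] at *
  obtain ⟨a, ha, hfa⟩ := hf
  obtain ⟨b, hb, hgb⟩ := hg
  exact ⟨fun z => (z:ℂ) ^ n * (a z * b z), memHinf_mul (memHinf_monomial n) (memHinf_mul ha hb),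
    fun z => by simp only [Pi.mul_apply, hfa z, hgb z]; ring⟩

lemma calAn_zero_mem (n : ℕ) : (0 : 𝔻 → ℂ) ∈ calAn n := by
  rw [mem_calAn_iff]
  exact ⟨0, memHinf_const 0, fun z => by simp⟩

end Stmt3Aux
end
noncomputable section
namespace Stmt3Aux
open Filter Topology

def monD (m : ℕ) : 𝔻 → ℂ := fun z => (z:ℂ) ^ m

@[simp] lemma monD_apply (m : ℕ) (z : 𝔻) : monD m z = (z:ℂ) ^ m := rfl

lemma monD_mem {n m : ℕ} (h : n ≤ m) : monD m ∈ calAn n := calAn_monomial h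

lemma diffOn_dslope' {F : ℂ → ℂ} {a : ℂ} (ha : a ∈ ball (0:ℂ) 1)
    (hF : DifferentiableOn ℂ F (ball (0:ℂ) 1)) :
    DifferentiableOn ℂ (dslope F a) (ball (0:ℂ) 1) := by
  intro x hx
  rcases eq_or_ne x a with rfl | hx0
  · obtain ⟨p, hp⟩ := (hF.analyticOnNhd isOpen_ball) x ha
    exact hp.has_fpower_series_dslope_fslope.differentiableAt.differentiableWithinAt
  · exact (differentiableWithinAt_dslope_of_ne hx0).2 (hF x hx)

lemma punctured_eq {u v : ℂ → ℂ} (hu : ContinuousAt u 0) (hv : ContinuousAt v 0)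
    (h : ∀ x ∈ ball (0:ℂ) 1, x ≠ 0 → u x = v x) : u 0 = v 0 := by
  have hev : u =ᶠ[𝓝[≠] (0:ℂ)] v := by
    filter_upwards [nhdsWithin_le_nhds (isOpen_ball.mem_nhds (mem_ball_self one_pos)),
      self_mem_nhdsWithin] with x hx hx0
    exact h x hx hx0
  exact tendsto_nhds_unique ((hu.tendsto.mono_left nhdsWithin_le_nhds).congr' hev)
    (hv.tendsto.mono_left nhdsWithin_le_nhds)

lemma punctured_norm_le {u : ℂ → ℂ} (hu : ContinuousAt u 0) {C : ℝ}
    (h : ∀ x ∈ ball (0:ℂ) 1, x ≠ 0 → ‖u x‖ ≤ C) : ‖u 0‖ ≤ C := by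
  have htd : Filter.Tendsto (fun x => ‖u x‖) (𝓝[≠] (0:ℂ)) (𝓝 ‖u 0‖) :=
    (hu.norm.tendsto.mono_left nhdsWithin_le_nhds)
  refine le_of_tendsto htd ?_
  filter_upwards [nhdsWithin_le_nhds (isOpen_ball.mem_nhds (mem_ball_self one_pos)),
    self_mem_nhdsWithin] with x hx hx0
  exact h x hx hx0

end Stmt3Aux
end
noncomputable section
namespace Stmt3Aux
open Filter Topology

lemma forward_core {n : ℕ} (hn : 1 ≤ n) {T : (𝔻 → ℂ) → (𝔻 → ℂ)}
    (hT : IsAlgAutOn (calAn n) T) :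
    ∃ (φ : 𝔻 → 𝔻) (Φ : ℂ → ℂ), DifferentiableOn ℂ Φ (ball (0:ℂ) 1) ∧ Φ 0 = 0 ∧
      (∀ z : 𝔻, Φ ↑z = ↑(φ z)) ∧ ∀ f ∈ calAn n, T f = f ∘ φ := by
  obtain ⟨hmap, hadd, hsmul, hmul, hinj, hsurj⟩ := hT
  have hne : (n:ℕ) ≠ 0 := by omega
  have hmonn : monD n ∈ calAn n := monD_mem le_rfl
  have hmonn1 : monD (n+1) ∈ calAn n := monD_mem (by omega)
  -- Step A : T (monD n) = z^n β with β invertible in H^∞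
  obtain ⟨m0, hm0A, hTm0⟩ := hsurj hmonn
  obtain ⟨m0h, hm0h, hm0fac⟩ := mem_calAn_iff.mp hm0A
  have hg0A : (fun z : 𝔻 => m0h z * m0 z) ∈ calAn n :=
    mem_calAn_iff.mpr ⟨fun z => m0h z * m0h z, memHinf_mul hm0h hm0h,
      fun z => by rw [hm0fac z]; ring⟩
  have hprod : m0 * m0 = monD n * (fun z : 𝔻 => m0h z * m0 z) := by
    funext z
    simp only [Pi.mul_apply, monD_apply]
    rw [hm0fac z]; ring
  obtain ⟨β, hβH, hβfac⟩ := mem_calAn_iff.mp (hmap _ hmonn)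
  obtain ⟨γ', hγ'H, hγ'fac⟩ := mem_calAn_iff.mp (hmap _ hg0A)
  have hkey0 : monD n * monD n = T (monD n) * T (fun z : 𝔻 => m0h z * m0 z) := by
    calc monD n * monD n = T m0 * T m0 := by rw [hTm0]
      _ = T (m0 * m0) := (hmul _ hm0A _ hm0A).symm
      _ = T (monD n * (fun z : 𝔻 => m0h z * m0 z)) := by rw [hprod]
      _ = T (monD n) * T (fun z : 𝔻 => m0h z * m0 z) := hmul _ hmonn _ hg0A
  have hβγ' : ∀ z : 𝔻, (z:ℂ) ≠ 0 → β z * γ' z = 1 := by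
    intro z hz
    have h1 := congrFun hkey0 z
    simp only [Pi.mul_apply, monD_apply] at h1
    rw [hβfac z, hγ'fac z] at h1
    have hzn : ((z:ℂ))^n ≠ 0 := pow_ne_zero _ hz
    have h2 : (z:ℂ)^n * (z:ℂ)^n * (β z * γ' z) = (z:ℂ)^n * (z:ℂ)^n * 1 := by
      rw [mul_one]; conv_rhs => rw [h1]
      ring
    exact mul_left_cancel₀ (mul_ne_zero hzn hzn) h2
  obtain ⟨Fβ, Mβ, hFβd, hFβeq, hFβM⟩ := memHinf_elim hβH
  obtain ⟨Fγ', Mγ', hFγ'd, hFγ'eq, hFγ'M⟩ := memHinf_elim hγ'H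
  have hβγall : ∀ z : 𝔻, β z * γ' z = 1 := by
    intro z
    rcases eq_or_ne ((z:ℂ)) 0 with hz | hz
    · have h0 := punctured_eq (u := fun x => Fβ x * Fγ' x) (v := fun _ => 1)
        (((hFβd.continuousOn.continuousAt (isOpen_ball.mem_nhds (mem_ball_self one_pos))).mul
          (hFγ'd.continuousOn.continuousAt (isOpen_ball.mem_nhds (mem_ball_self one_pos)))))
        continuousAt_const ?_
      · have : Fβ ↑z * Fγ' ↑z = 1 := by rw [hz]; exact h0
        rwa [hFβeq z, hFγ'eq z] at this
      · intro x hx hx0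
        have := hβγ' (mkD x hx) (by simpa using hx0)
        rwa [← hFβeq (mkD x hx), ← hFγ'eq (mkD x hx)] at this
    · exact hβγ' z hz
  have hβne : ∀ z : 𝔻, β z ≠ 0 := fun z => left_ne_zero_of_mul_eq_one (hβγall z)
  -- Step B : φ₀ = γ·γ'
  obtain ⟨γ, hγH, hγfac⟩ := mem_calAn_iff.mp (hmap _ hmonn1)
  obtain ⟨Fγ, Mγ, hFγd, hFγeq, hFγM⟩ := memHinf_elim hγH
  set Φ : ℂ → ℂ := fun x => Fγ x * Fγ' x with hΦdef
  have hΦd : DifferentiableOn ℂ Φ (ball (0:ℂ) 1) := hFγd.mul hFγ'd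
  have hΦD : ∀ z : 𝔻, Φ ↑z = γ z * γ' z := fun z => by
    show Fγ ↑z * Fγ' ↑z = γ z * γ' z
    rw [hFγeq z, hFγ'eq z]
  have hγβ : ∀ z : 𝔻, γ z * γ' z * β z = γ z := by
    intro z
    have := hβγall z
    calc γ z * γ' z * β z = γ z * (β z * γ' z) := by ring
      _ = γ z := by rw [this, mul_one]
  -- Step B1 : |φ₀| ≤ 1 away from 0
  have hle : ∀ v : 𝔻, (v:ℂ) ≠ 0 → ‖γ v * γ' v‖ ≤ 1 := by
    intro v hv
    by_contra hgt
    push_neg at hgt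
    set l := γ v * γ' v with hldef
    -- the element z^n (z - l)⁻¹ of calAn n
    have hinvH : MemHinf (fun z : 𝔻 => ((z:ℂ) - l)⁻¹) := by
      refine memHinf_def (fun x => (x - l)⁻¹)
        (DifferentiableOn.inv ((differentiable_id.sub_const l).differentiableOn)
          (fun x hx => sub_ne_zero.mpr ?_)) (fun z => rfl) (‖l‖ - 1)⁻¹ (fun x hx => ?_)
      · intro hxl
        rw [hxl] at hx
        exact absurd (mem_ball_zero_iff.mp hx) (not_lt.mpr (le_of_lt hgt))
      · have h1 : ‖x - l‖ ≥ ‖l‖ - ‖x‖ := by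
          have := norm_sub_norm_le l x
          rw [norm_sub_rev] at this
          linarith [norm_sub_norm_le (x - l) 0]
        have hx1 : ‖x‖ < 1 := mem_ball_zero_iff.mp hx
        have h2 : ‖l‖ - 1 < ‖x - l‖ := by linarith
        rw [norm_inv]
        exact inv_anti₀ (by linarith) (le_of_lt h2)
    have hm'A : (fun z : 𝔻 => (z:ℂ)^n * ((z:ℂ) - l)⁻¹) ∈ calAn n :=
      mem_calAn_iff.mpr ⟨fun z => ((z:ℂ) - l)⁻¹, hinvH, fun z => rfl⟩
    have hkA : (monD (n+1) + (-l) • monD n) ∈ calAn n :=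
      calAn_add hmonn1 (calAn_smul _ hmonn)
    have hidk : (monD (n+1) + (-l) • monD n) * (fun z : 𝔻 => (z:ℂ)^n * ((z:ℂ) - l)⁻¹)
        = monD n * monD n := by
      funext z
      simp only [Pi.mul_apply, Pi.add_apply, Pi.smul_apply, monD_apply, smul_eq_mul]
      have hzl : (z:ℂ) - l ≠ 0 :=
        sub_ne_zero.mpr (fun h => absurd (h ▸ norm_coe_lt_one z) (not_lt.mpr hgt.le))
      field_simp
      ring
    have hTid := congrFun (by
      calc T (monD (n+1) + (-l) • monD n) * T (fun z : 𝔻 => (z:ℂ)^n * ((z:ℂ) - l)⁻¹)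
          = T ((monD (n+1) + (-l) • monD n) * (fun z : 𝔻 => (z:ℂ)^n * ((z:ℂ) - l)⁻¹)) :=
            (hmul _ hkA _ hm'A).symm
        _ = T (monD n * monD n) := by rw [hidk]
        _ = T (monD n) * T (monD n) := hmul _ hmonn _ hmonn) v
    have hTk : T (monD (n+1) + (-l) • monD n) = T (monD (n+1)) + (-l) • T (monD n) := by
      rw [hadd _ hmonn1 _ (calAn_smul _ hmonn), hsmul _ _ hmonn]
    rw [hTk] at hTid
    simp only [Pi.mul_apply, Pi.add_apply, Pi.smul_apply, smul_eq_mul] at hTid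
    rw [hγfac v, hβfac v] at hTid
    have hzero : (v:ℂ)^n * γ v + -l * ((v:ℂ)^n * β v) = 0 := by
      have hlb : l * β v = γ v := by rw [hldef]; exact hγβ v
      rw [← hlb]; ring
    rw [hzero, zero_mul] at hTid
    have : (v:ℂ)^n * β v = 0 := by
      have h2 := hTid.symm
      exact mul_self_eq_zero.mp h2
    rcases mul_eq_zero.mp this with h | h
    · exact hv (pow_eq_zero_iff hne |>.mp h)
    · exact hβne v h
  -- |Φ| ≤ 1 on the ball
  have hΦle : ∀ x ∈ ball (0:ℂ) 1, ‖Φ x‖ ≤ 1 := by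
    intro x hx
    rcases eq_or_ne x 0 with rfl | hx0
    · refine punctured_norm_le (u := Φ)
        (hΦd.continuousOn.continuousAt (isOpen_ball.mem_nhds (mem_ball_self one_pos))) ?_
      intro y hy hy0
      rw [show y = ((mkD y hy : 𝔻) : ℂ) from rfl, hΦD (mkD y hy)]
      exact hle (mkD y hy) (by simpa using hy0)
    · rw [show x = ((mkD x hx : 𝔻) : ℂ) from rfl, hΦD (mkD x hx)]
      exact hle (mkD x hx) (by simpa using hx0)
  -- |Φ| < 1 on the ball
  have hΦlt : ∀ x ∈ ball (0:ℂ) 1, ‖Φ x‖ < 1 := by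
    intro x hx
    rcases lt_or_eq_of_le (hΦle x hx) with h | h
    · exact h
    · exfalso
      have hmax : IsMaxOn (norm ∘ Φ) (ball (0:ℂ) 1) x := by
        intro y hy
        simp only [Function.comp_apply, Set.mem_setOf_eq]
        rw [h]
        exact hΦle y hy
      have heq := Complex.eqOn_of_isPreconnected_of_isMaxOn_norm
        (convex_ball (0:ℂ) 1).isPreconnected isOpen_ball hΦd hx hmax
      set μ := Φ x with hμdef
      have hμ : ∀ z : 𝔻, γ z * γ' z = μ := fun z => by
        rw [← hΦD z]
        exact heq (coe_mem_ball z)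
      have hTc : T (monD (n+1)) = T (μ • monD n) := by
        rw [hsmul _ _ hmonn]
        funext z
        simp only [Pi.smul_apply, smul_eq_mul]
        rw [hγfac z, hβfac z]
        have : γ z = μ * β z := by rw [← hμ z, hγβ z]
        rw [this]; ring
      have hmono : monD (n+1) = μ • monD n :=
        hinj hmonn1 (calAn_smul _ hmonn) hTc
      have hval : ∀ x0 : ℂ, (hx0 : x0 ∈ ball (0:ℂ) 1) → x0 ≠ 0 → x0 = μ := by
        intro x0 hx0 hx00
        have := congrFun hmono (mkD x0 hx0)
        simp only [Pi.smul_apply, smul_eq_mul, monD_apply, coe_mkD] at this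
        have hxn : x0 ^ n ≠ 0 := pow_ne_zero _ hx00
        rw [pow_succ] at this
        have : x0 ^ n * x0 = x0 ^ n * μ := by rw [this]; ring
        exact mul_left_cancel₀ hxn this
      have h2 := hval (1/2 : ℂ) (by norm_num [mem_ball_zero_iff]) (by norm_num)
      have h4 := hval (1/4 : ℂ) (by norm_num [mem_ball_zero_iff]) (by norm_num)
      rw [← h2] at h4
      norm_num at h4
  -- definition of φ
  have hφmem : ∀ z : 𝔻, γ z * γ' z ∈ ball (0:ℂ) 1 := by
    intro z
    rw [mem_ball_zero_iff, ← hΦD z]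
    exact hΦlt _ (coe_mem_ball z)
  set φ : 𝔻 → 𝔻 := fun z => mkD (γ z * γ' z) (hφmem z) with hφdef
  have hφcoe : ∀ z : 𝔻, (↑(φ z) : ℂ) = γ z * γ' z := fun z => rfl
  have hΦφ : ∀ z : 𝔻, Φ ↑z = ↑(φ z) := fun z => by rw [hφcoe, hΦD]
  -- Step C : key evaluation formula away from 0
  have hkey : ∀ f, f ∈ calAn n → ∀ v : 𝔻, (v:ℂ) ≠ 0 → T f v = f (φ v) := by
    intro f hf v hv
    obtain ⟨Ff, Mf, hFfd, hFfeq, hFfM⟩ := memHinf_elim hf.1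
    set w : 𝔻 := φ v with hwdef
    set μ : ℂ := f w with hμdef
    set Fw : ℂ → ℂ := fun x => Ff x - μ with hFwdef
    have hFwd : DifferentiableOn ℂ Fw (ball (0:ℂ) 1) := hFfd.sub (differentiableOn_const μ)
    have hFw0 : Fw ↑w = 0 := by
      show Ff ↑w - μ = 0
      rw [hFfeq w, hμdef, sub_self]
    have hQd : DifferentiableOn ℂ (dslope Fw ↑w) (ball (0:ℂ) 1) :=
      diffOn_dslope' (coe_mem_ball w) hFwd
    have hQfac : ∀ x : ℂ, Fw x = (x - ↑w) * dslope Fw ↑w x := by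
      intro x
      have h := sub_smul_dslope Fw ↑w x
      rw [hFw0, sub_zero, smul_eq_mul] at h
      exact h.symm
    have hQM : ∀ x ∈ ball (0:ℂ) 1, ‖dslope Fw ↑w x‖ ≤ (Mf + ‖μ‖) / (1 - ‖(w:ℂ)‖) := by
      refine bound_of_linear_factor hQd (norm_coe_lt_one w) (fun x _ => hQfac x) ?_
      intro x hx
      show ‖Ff x - μ‖ ≤ Mf + ‖μ‖
      exact le_trans (norm_sub_le _ _) (add_le_add (hFfM x hx) le_rfl)
    have hqH : MemHinf (fun z : 𝔻 => dslope Fw ↑w ↑z) :=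
      memHinf_def (dslope Fw ↑w) hQd (fun _ => rfl) _ hQM
    have hmqA : (fun z : 𝔻 => (z:ℂ)^n * dslope Fw ↑w ↑z) ∈ calAn n :=
      mem_calAn_iff.mpr ⟨_, hqH, fun _ => rfl⟩
    have hkwA : (monD (n+1) + (-(w:ℂ)) • monD n) ∈ calAn n :=
      calAn_add hmonn1 (calAn_smul _ hmonn)
    have hident : (f * monD n) * monD n
        = (monD (n+1) + (-(w:ℂ)) • monD n) * (fun z : 𝔻 => (z:ℂ)^n * dslope Fw ↑w ↑z)
          + μ • (monD n * monD n) := by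
      funext z
      simp only [Pi.mul_apply, Pi.add_apply, Pi.smul_apply, monD_apply, smul_eq_mul]
      have h1 : f z = Fw ↑z + μ := by
        show f z = Ff ↑z - μ + μ
        rw [hFfeq z]; ring
      rw [h1, hQfac ↑z]
      ring
    have hfm : f * monD n ∈ calAn n := calAn_mul hf hmonn
    have hTleft : T ((f * monD n) * monD n) = (T f * T (monD n)) * T (monD n) := by
      rw [hmul _ hfm _ hmonn, hmul _ hf _ hmonn]
    have hkwmq : (monD (n+1) + (-(w:ℂ)) • monD n)
        * (fun z : 𝔻 => (z:ℂ)^n * dslope Fw ↑w ↑z) ∈ calAn n :=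
      calAn_mul hkwA hmqA
    have hTright : T ((monD (n+1) + (-(w:ℂ)) • monD n)
          * (fun z : 𝔻 => (z:ℂ)^n * dslope Fw ↑w ↑z) + μ • (monD n * monD n))
        = (T (monD (n+1)) + (-(w:ℂ)) • T (monD n))
            * T (fun z : 𝔻 => (z:ℂ)^n * dslope Fw ↑w ↑z)
          + μ • (T (monD n) * T (monD n)) := by
      rw [hadd _ hkwmq _ (calAn_smul _ (calAn_mul hmonn hmonn)),
        hsmul _ _ (calAn_mul hmonn hmonn), hmul _ hkwA _ hmqA,
        hadd _ hmonn1 _ (calAn_smul _ hmonn), hsmul _ _ hmonn,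
        hmul _ hmonn _ hmonn]
    have hTeq : (T f * T (monD n)) * T (monD n)
        = (T (monD (n+1)) + (-(w:ℂ)) • T (monD n))
            * T (fun z : 𝔻 => (z:ℂ)^n * dslope Fw ↑w ↑z)
          + μ • (T (monD n) * T (monD n)) := by
      rw [← hTleft, ← hTright, hident]
    have heval := congrFun hTeq v
    simp only [Pi.mul_apply, Pi.add_apply, Pi.smul_apply, smul_eq_mul] at heval
    rw [hβfac v, hγfac v] at heval
    have hwc : ((w:𝔻):ℂ) = γ v * γ' v := hφcoe v
    have hzerok : (v:ℂ)^n * γ v + -(w:ℂ) * ((v:ℂ)^n * β v) = 0 := by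
      rw [hwc]
      linear_combination (-((v:ℂ)^n)) * (hγβ v)
    rw [hzerok, zero_mul, zero_add] at heval
    have hvb : (v:ℂ)^n * β v ≠ 0 := mul_ne_zero (pow_ne_zero _ hv) (hβne v)
    have hfin : T f v = μ := by
      have h2 : (T f v) * (((v:ℂ)^n*β v) * ((v:ℂ)^n*β v))
          = μ * (((v:ℂ)^n*β v) * ((v:ℂ)^n*β v)) := by
        linear_combination heval
      exact mul_right_cancel₀ (mul_ne_zero hvb hvb) h2
    rw [hfin, hμdef]
  -- Step D : Φ 0 = 0
  have hc0 : (0:ℂ) ∈ ball (0:ℂ) 1 := mem_ball_self one_pos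
  have hΦ0 : Φ 0 = 0 := by
    have heqn := punctured_eq (u := fun x => Φ x ^ n) (v := fun x => x ^ n * Fβ x)
      ((hΦd.continuousOn.continuousAt (isOpen_ball.mem_nhds hc0)).pow n)
      (((continuous_pow n).continuousAt).mul
        (hFβd.continuousOn.continuousAt (isOpen_ball.mem_nhds hc0))) ?_
    · have h0 : Φ 0 ^ n = 0 := by
        have heqn' : Φ 0 ^ n = 0 ^ n * Fβ 0 := heqn
        rw [heqn', zero_pow hne, zero_mul]
      exact (pow_eq_zero_iff hne).mp h0
    · intro x hx hx0
      have h1 := hkey (monD n) hmonn (mkD x hx) (by simpa using hx0)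
      rw [hβfac (mkD x hx)] at h1
      show Φ x ^ n = x ^ n * Fβ x
      rw [show Φ x = ((φ (mkD x hx) : 𝔻) : ℂ) from hΦφ (mkD x hx),
        show Fβ x = β (mkD x hx) from hFβeq (mkD x hx)]
      exact h1.symm
  have hφ0 : ∀ v : 𝔻, (v:ℂ) = 0 → ((φ v : 𝔻) : ℂ) = 0 := fun v hv => by
    rw [← hΦφ v, hv, hΦ0]
  -- Step E : the full composition formula
  have hTfull : ∀ f ∈ calAn n, T f = f ∘ φ := by
    intro f hf
    funext v
    rcases eq_or_ne ((v:ℂ)) 0 with hv | hv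
    · obtain ⟨fh, hfhH, hffac⟩ := mem_calAn_iff.mp hf
      obtain ⟨th, hthH, htfac⟩ := mem_calAn_iff.mp (hmap _ hf)
      show T f v = f (φ v)
      rw [htfac v, hffac (φ v), hv, hφ0 v hv, zero_pow hne, zero_mul, zero_mul]
    · exact hkey f hf v hv
  exact ⟨φ, Φ, hΦd, hΦ0, hΦφ, hTfull⟩

end Stmt3Aux
end
noncomputable section
namespace Stmt3Aux
open Filter Topology

lemma inverse_autOn {n : ℕ} {T : (𝔻 → ℂ) → (𝔻 → ℂ)} (hT : IsAlgAutOn (calAn n) T) :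
    ∃ S : (𝔻 → ℂ) → (𝔻 → ℂ), IsAlgAutOn (calAn n) S ∧
      (∀ f ∈ calAn n, T (S f) = f) ∧ (∀ f ∈ calAn n, S (T f) = f) := by
  classical
  obtain ⟨hmap, hadd, hsmul, hmul, hinj, hsurj⟩ := hT
  set S : (𝔻 → ℂ) → (𝔻 → ℂ) := fun f =>
    if hf : f ∈ calAn n then (hsurj hf).choose else 0 with hSdef
  have hSA : ∀ f ∈ calAn n, S f ∈ calAn n := by
    intro f hf
    show (if hf : f ∈ calAn n then (hsurj hf).choose else 0) ∈ calAn n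
    rw [dif_pos hf]
    exact (hsurj hf).choose_spec.1
  have hTS : ∀ f ∈ calAn n, T (S f) = f := by
    intro f hf
    show T (if hf : f ∈ calAn n then (hsurj hf).choose else 0) = f
    rw [dif_pos hf]
    exact (hsurj hf).choose_spec.2
  have hST : ∀ f ∈ calAn n, S (T f) = f := by
    intro f hf
    exact hinj (hSA _ (hmap _ hf)) hf (hTS _ (hmap _ hf))
  refine ⟨S, ⟨hSA, ?_, ?_, ?_, ?_, ?_⟩, hTS, hST⟩
  · intro f hf g hg
    refine hinj (hSA _ (calAn_add hf hg)) (calAn_add (hSA _ hf) (hSA _ hg)) ?_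
    rw [hTS _ (calAn_add hf hg), hadd _ (hSA _ hf) _ (hSA _ hg), hTS _ hf, hTS _ hg]
  · intro c f hf
    refine hinj (hSA _ (calAn_smul c hf)) (calAn_smul c (hSA _ hf)) ?_
    rw [hTS _ (calAn_smul c hf), hsmul _ _ (hSA _ hf), hTS _ hf]
  · intro f hf g hg
    refine hinj (hSA _ (calAn_mul hf hg)) (calAn_mul (hSA _ hf) (hSA _ hg)) ?_
    rw [hTS _ (calAn_mul hf hg), hmul _ (hSA _ hf) _ (hSA _ hg), hTS _ hf, hTS _ hg]
  · intro f hf g hg heq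
    rw [← hTS _ hf, ← hTS _ hg, heq]
  · intro f hf
    exact ⟨T f, hmap _ hf, hST _ hf⟩

lemma half_mem : (1/2 : ℂ) ∈ ball (0:ℂ) 1 := by
  rw [mem_ball_zero_iff, show (1/2 : ℂ) = ((1/2 : ℝ) : ℂ) by norm_num, Complex.norm_real]
  norm_num

lemma forward {n : ℕ} (hn : 1 ≤ n) {T : (𝔻 → ℂ) → (𝔻 → ℂ)}
    (hT : IsAlgAutOn (calAn n) T) :
    ∃ θ : ℝ, ∃ φ : 𝔻 → 𝔻,
      (∀ z : 𝔻, (↑(φ z) : ℂ) = Complex.exp (θ * Complex.I) * ↑z) ∧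
      ∀ f ∈ calAn n, T f = f ∘ φ := by
  have hne : n ≠ 0 := by omega
  obtain ⟨S, hS, hTS, hST⟩ := inverse_autOn hT
  obtain ⟨φ, Φ, hΦd, hΦ0, hΦφ, hTfull⟩ := forward_core hn hT
  obtain ⟨ψ, Ψ, hΨd, hΨ0, hΨψ, hSfull⟩ := forward_core hn hS
  -- φ ∘ ψ = id
  have hcomp : ∀ v : 𝔻, φ (ψ v) = v := by
    intro v
    have hfeq : ∀ f, f ∈ calAn n → f (φ (ψ v)) = f v := by
      intro f hf
      calc f (φ (ψ v)) = ((f ∘ φ) ∘ ψ) v := rfl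
        _ = (T f ∘ ψ) v := by rw [← hTfull f hf]
        _ = S (T f) v := by rw [← hSfull (T f) (hT.1 _ hf)]
        _ = f v := by rw [hST f hf]
    have hn1 : ((φ (ψ v) : 𝔻) : ℂ) ^ n = (v:ℂ) ^ n := hfeq (monD n) (monD_mem le_rfl)
    have hn2 : ((φ (ψ v) : 𝔻) : ℂ) ^ (n+1) = (v:ℂ) ^ (n+1) :=
      hfeq (monD (n+1)) (monD_mem (by omega))
    apply Complex.UnitDisc.coe_injective
    rcases eq_or_ne ((v:ℂ)) 0 with hv | hv
    · rw [hv]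
      refine (pow_eq_zero_iff hne).mp ?_
      rw [hn1, hv, zero_pow hne]
    · have hstep : ((φ (ψ v) : 𝔻) : ℂ) * (v:ℂ)^n = (v:ℂ) * (v:ℂ)^n := by
        calc ((φ (ψ v) : 𝔻) : ℂ) * (v:ℂ)^n
            = ((φ (ψ v) : 𝔻) : ℂ) * ((φ (ψ v) : 𝔻) : ℂ)^n := by rw [hn1]
          _ = ((φ (ψ v) : 𝔻) : ℂ)^(n+1) := by rw [pow_succ]; ring
          _ = (v:ℂ)^(n+1) := hn2
          _ = (v:ℂ) * (v:ℂ)^n := by rw [pow_succ]; ring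
      exact mul_right_cancel₀ (pow_ne_zero _ hv) hstep
  -- factor Φ = z·g, Ψ = z·h
  obtain ⟨g, hgd, hgfac⟩ := exists_factor (n := 1) hΦd (by
    intro k hk
    have hk0 : k = 0 := by omega
    subst hk0
    simpa using hΦ0)
  obtain ⟨h, hhd, hhfac⟩ := exists_factor (n := 1) hΨd (by
    intro k hk
    have hk0 : k = 0 := by omega
    subst hk0
    simpa using hΨ0)
  have hΦle : ∀ x ∈ ball (0:ℂ) 1, ‖Φ x‖ ≤ 1 := by
    intro x hx
    rw [show x = ((mkD x hx : 𝔻) : ℂ) from rfl, hΦφ (mkD x hx)]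
    exact (norm_coe_lt_one _).le
  have hΨle : ∀ x ∈ ball (0:ℂ) 1, ‖Ψ x‖ ≤ 1 := by
    intro x hx
    rw [show x = ((mkD x hx : 𝔻) : ℂ) from rfl, hΨψ (mkD x hx)]
    exact (norm_coe_lt_one _).le
  have hgle : ∀ x ∈ ball (0:ℂ) 1, ‖g x‖ ≤ 1 :=
    bound_of_pow_factor (n := 1) hgd hgfac hΦle
  have hhle : ∀ x ∈ ball (0:ℂ) 1, ‖h x‖ ≤ 1 :=
    bound_of_pow_factor (n := 1) hhd hhfac hΨle
  -- the special point
  set v₀ : 𝔻 := mkD (1/2 : ℂ) half_mem with hv₀def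
  set u₀ : ℂ := (↑(ψ v₀) : ℂ) with hu₀def
  have hu₀ball : u₀ ∈ ball (0:ℂ) 1 := coe_mem_ball _
  have hΓΨ : Φ u₀ = (1/2 : ℂ) := by
    rw [hu₀def, hΦφ (ψ v₀), hcomp v₀]
    rfl
  have e1 : u₀ * g u₀ = 1/2 := by
    have hx := hgfac u₀ hu₀ball
    rw [pow_one] at hx
    rw [← hx, hΓΨ]
  have e2 : u₀ = (1/2:ℂ) * h (1/2) := by
    have hx := hhfac (1/2:ℂ) half_mem
    rw [pow_one] at hx
    have : Ψ ((v₀ : 𝔻) : ℂ) = u₀ := hΨψ v₀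
    rw [show ((v₀ : 𝔻) : ℂ) = (1/2:ℂ) from rfl] at this
    rw [← this, hx]
  have hgu : ‖g u₀‖ = 1 := by
    have h2 : h (1/2:ℂ) * g u₀ = 1 := by
      have hhalf : (1/2 : ℂ) ≠ 0 := by norm_num
      refine mul_left_cancel₀ hhalf ?_
      rw [mul_one]
      calc (1/2:ℂ) * (h (1/2) * g u₀) = ((1/2:ℂ) * h (1/2)) * g u₀ := by ring
        _ = u₀ * g u₀ := by rw [← e2]
        _ = 1/2 := e1
    have hnorm := congrArg norm h2
    rw [norm_mul, norm_one] at hnorm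
    have hg1 : ‖g u₀‖ ≤ 1 := hgle _ hu₀ball
    have hh1 : ‖h (1/2:ℂ)‖ ≤ 1 := hhle _ half_mem
    have hgpos : 0 ≤ ‖g u₀‖ := norm_nonneg _
    have hhpos : 0 ≤ ‖h (1/2:ℂ)‖ := norm_nonneg _
    nlinarith
  -- maximum modulus: g is constant
  have hmax : IsMaxOn (norm ∘ g) (ball (0:ℂ) 1) u₀ := by
    intro y hy
    simp only [Function.comp_apply, Set.mem_setOf_eq, hgu]
    exact hgle y hy
  have heq := Complex.eqOn_of_isPreconnected_of_isMaxOn_norm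
    (convex_ball (0:ℂ) 1).isPreconnected isOpen_ball hgd hu₀ball hmax
  set η := g u₀ with hηdef
  have hηnorm : ‖η‖ = 1 := hgu
  have hΦlin : ∀ z : 𝔻, (↑(φ z):ℂ) = η * ↑z := by
    intro z
    rw [← hΦφ z, hgfac ↑z (coe_mem_ball z), pow_one]
    rw [show g ↑z = η from heq (coe_mem_ball z)]
    ring
  refine ⟨η.arg, φ, ?_, hTfull⟩
  intro z
  rw [hΦlin z]
  have habs : ‖η‖ = 1 := hηnorm
  have hexp := Complex.norm_mul_exp_arg_mul_I η
  rw [habs, ofReal_one, one_mul] at hexp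
  rw [hexp]

lemma comp_rot_mem {n : ℕ} {η : ℂ} (hη : ‖η‖ = 1) (χ : 𝔻 → 𝔻)
    (hχ : ∀ z : 𝔻, (↑(χ z):ℂ) = η * ↑z) {f : 𝔻 → ℂ} (hf : f ∈ calAn n) :
    f ∘ χ ∈ calAn n := by
  have hηn : ‖η‖ = 1 := by rw [hη]
  obtain ⟨g, hg, hfac⟩ := mem_calAn_iff.mp hf
  obtain ⟨G, M, hGd, hGeq, hGM⟩ := memHinf_elim hg
  have hmaps : MapsTo (fun x : ℂ => η * x) (ball (0:ℂ) 1) (ball (0:ℂ) 1) := by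
    intro x hx
    rw [mem_ball_zero_iff, norm_mul, hηn, one_mul]
    exact mem_ball_zero_iff.mp hx
  refine mem_calAn_iff.mpr ⟨fun z => η^n * g (χ z), ?_, ?_⟩
  · refine memHinf_def (fun x => η^n * G (η * x))
      ((hGd.comp ((differentiable_id.const_mul η).differentiableOn) hmaps).const_mul _)
      (fun z => ?_) M (fun x hx => ?_)
    · show η^n * G (η * ↑z) = η^n * g (χ z)
      rw [← hχ z, hGeq (χ z)]
    · show ‖η^n * G (η * x)‖ ≤ M
      rw [norm_mul, norm_pow, hηn, one_pow, one_mul]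
      exact hGM _ (hmaps hx)
  · intro z
    show f (χ z) = ↑z^n * (η^n * g (χ z))
    rw [hfac (χ z), hχ z]
    ring

set_option maxHeartbeats 1000000 in
lemma backward {n : ℕ} (hn : 1 ≤ n) {T : (𝔻 → ℂ) → (𝔻 → ℂ)} {θ : ℝ} {φ : 𝔻 → 𝔻}
    (hφ : ∀ z : 𝔻, (↑(φ z):ℂ) = Complex.exp (θ * Complex.I) * ↑z)
    (hTf : ∀ f ∈ calAn n, T f = f ∘ φ) : IsAlgAutOn (calAn n) T := by
  set η : ℂ := Complex.exp (θ * Complex.I) with hηdef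
  have hη : ‖η‖ = 1 := Complex.norm_exp_ofReal_mul_I θ
  have hηne : η ≠ 0 := Complex.exp_ne_zero _
  have hη' : ‖η⁻¹‖ = 1 := by rw [norm_inv, hη, inv_one]
  have hmem : ∀ z : 𝔻, η⁻¹ * (z:ℂ) ∈ ball (0:ℂ) 1 := by
    intro z
    rw [mem_ball_zero_iff, norm_mul, show ‖η⁻¹‖ = 1 by rw [hη'], one_mul]
    exact norm_coe_lt_one z
  obtain ⟨χ, hχ⟩ : ∃ χ : 𝔻 → 𝔻, ∀ z : 𝔻, (↑(χ z):ℂ) = η⁻¹ * (z:ℂ) :=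
    ⟨fun z => mkD (η⁻¹ * (z:ℂ)) (hmem z), fun z => rfl⟩
  have hφχ : ∀ z : 𝔻, φ (χ z) = z := by
    intro z
    apply Complex.UnitDisc.coe_injective
    rw [hφ (χ z), hχ z]
    field_simp
  have hχφ : ∀ z : 𝔻, χ (φ z) = z := by
    intro z
    apply Complex.UnitDisc.coe_injective
    rw [hχ (φ z), hφ z]
    field_simp
  refine ⟨?_, ?_, ?_, ?_, ?_, ?_⟩
  · intro f hf
    rw [hTf f hf]
    exact comp_rot_mem hη φ hφ hf
  · intro f hf g hg
    rw [hTf _ (calAn_add hf hg), hTf _ hf, hTf _ hg]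
    funext z
    rfl
  · intro c f hf
    rw [hTf _ (calAn_smul c hf), hTf _ hf]
    funext z
    rfl
  · intro f hf g hg
    rw [hTf _ (calAn_mul hf hg), hTf _ hf, hTf _ hg]
    funext z
    rfl
  · intro f hf g hg heqTfg
    rw [hTf _ hf, hTf _ hg] at heqTfg
    funext z
    calc f z = f (φ (χ z)) := by rw [hφχ z]
      _ = (f ∘ φ) (χ z) := rfl
      _ = (g ∘ φ) (χ z) := by rw [heqTfg]
      _ = g (φ (χ z)) := rfl
      _ = g z := by rw [hφχ z]
  · intro f hf
    refine ⟨f ∘ χ, comp_rot_mem hη' χ hχ hf, ?_⟩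
    rw [hTf _ (comp_rot_mem hη' χ hχ hf)]
    funext z
    show f (χ (φ z)) = f z
    rw [hχφ z]

end Stmt3Aux
end

/-- `T` is an algebra automorphism of `𝒜₀ⁿ` iff
`T f = f ∘ (z ↦ e^{iθ} z)` for some `θ ∈ ℝ`. -/
theorem stmt_3 (n : ℕ) (hn : 1 ≤ n) (T : (𝔻 → ℂ) → (𝔻 → ℂ)) :
    IsAlgAutOn (calAn n) T ↔
      ∃ θ : ℝ, ∃ φ : 𝔻 → 𝔻,
        (∀ z : 𝔻, (↑(φ z) : ℂ) = Complex.exp (θ * Complex.I) * ↑z) ∧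
        ∀ f ∈ calAn n, T f = f ∘ φ := by
  constructor
  · intro hT
    exact Stmt3Aux.forward hn hT
  · rintro ⟨θ, φ, hφ, hTf⟩
    exact Stmt3Aux.backward hn hφ hTf
end

section
/- Let ψ ∈ H^∞ be not identically zero and let T be an algebra automorphism (bijective, ℂ-linear, multiplicative self-map) of ψH^∞. Then T(ψ) = ψ·g for some invertible element g of H^∞, i.e., some g ∈ H^∞ for which there exists h ∈ H^∞ with g·h ≡ 1 on 𝔻. -/
open Complex Metric Set

local notation "𝔻" => Complex.UnitDisc

lemma memHinf_mul {f g : 𝔻 → ℂ} (hf : MemHinf f) (hg : MemHinf g) :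
    MemHinf (fun z => f z * g z) := by
  obtain ⟨⟨F, hF, hFf⟩, M, hM⟩ := hf
  obtain ⟨⟨G, hG, hGg⟩, N, hN⟩ := hg
  refine ⟨⟨fun z => F z * G z, hF.mul hG, fun z => show F ↑z * G ↑z = f z * g z by rw [hFf, hGg]⟩,
    max M 0 * max N 0, fun z => ?_⟩
  rw [norm_mul]
  exact mul_le_mul ((hM z).trans (le_max_left _ _)) ((hN z).trans (le_max_left _ _))
    (norm_nonneg _) (le_max_right _ _)

lemma memHinf_one : MemHinf (fun _ : 𝔻 => (1 : ℂ)) :=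
  ⟨⟨fun _ => 1, differentiableOn_const 1, fun _ => rfl⟩, 1, fun _ => by simp⟩

/-- if `ψ ∈ H^∞` is not identically zero and `T` is an algebra automorphism
of `ψ H^∞`, then `T ψ = ψ · g` for some invertible element `g` of `H^∞`. -/
theorem stmt_8 (ψ : 𝔻 → ℂ) (hψ : MemHinf ψ) (hne : ∃ z, ψ z ≠ 0)
    (T : (𝔻 → ℂ) → (𝔻 → ℂ)) (hT : IsAlgAutOn (psiH ψ) T) :
    ∃ g : 𝔻 → ℂ, InvHinf g ∧ T ψ = fun z => ψ z * g z := by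
  obtain ⟨hmap, hadd, hsmul, hmul, hinj, hsurj⟩ := hT
  have hψA : ψ ∈ psiH ψ := ⟨fun _ => 1, memHinf_one, by funext z; simp⟩
  obtain ⟨g, hg, hTψ⟩ := hmap ψ hψA
  obtain ⟨w, hwA, hTw⟩ := hsurj hψA
  obtain ⟨k, hk, hw⟩ := hwA
  set u : 𝔻 → ℂ := fun z => ψ z * (k z * k z) with hu_def
  have huA : u ∈ psiH ψ := ⟨fun z => k z * k z, memHinf_mul hk hk, rfl⟩
  obtain ⟨r, hr, hTu⟩ := hmap u huA
  have hww : ψ * u = w * w := by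
    funext z
    show ψ z * u z = w z * w z
    rw [hw]; ring
  have key : (fun z => ψ z * g z) * (fun z => ψ z * r z) = ψ * ψ := by
    calc (fun z => ψ z * g z) * (fun z => ψ z * r z)
        = T ψ * T u := by rw [hTψ, hTu]
      _ = T (ψ * u) := (hmul ψ hψA u huA).symm
      _ = T (w * w) := by rw [hww]
      _ = T w * T w := hmul w (⟨k, hk, hw⟩) w (⟨k, hk, hw⟩)
      _ = ψ * ψ := by rw [hTw]
  have hgr : ∀ z : 𝔻, ψ z ≠ 0 → g z * r z = 1 := by
    intro z hz
    have h1 := congrFun key z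
    simp only [Pi.mul_apply] at h1
    have h2 : (ψ z * ψ z) * (g z * r z) = (ψ z * ψ z) * 1 := by
      rw [mul_one]; linear_combination h1
    exact mul_left_cancel₀ (mul_ne_zero hz hz) h2
  -- identity theorem: g * r = 1 everywhere
  obtain ⟨G, hG, hGg⟩ := hg.1
  obtain ⟨R, hR, hRr⟩ := hr.1
  obtain ⟨Ψ, hΨ, hΨψ⟩ := hψ.1
  obtain ⟨z₀, hz₀⟩ := hne
  have hz₀b : (z₀ : ℂ) ∈ ball (0 : ℂ) 1 := z₀.2
  have hΨz₀ : Ψ (z₀ : ℂ) ≠ 0 := by rw [hΨψ]; exact hz₀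
  have hcont : ContinuousAt Ψ (z₀ : ℂ) :=
    (hΨ.differentiableAt (isOpen_ball.mem_nhds hz₀b)).continuousAt
  have hev : (fun z => G z * R z) =ᶠ[nhds (z₀ : ℂ)] (fun _ => (1 : ℂ)) := by
    filter_upwards [hcont.eventually_ne hΨz₀, isOpen_ball.eventually_mem hz₀b] with z hz hzb
    have hzb' : ‖z‖ < 1 := mem_ball_zero_iff.1 hzb
    set ζ : 𝔻 := Complex.UnitDisc.mk z hzb'
    have hψζ : ψ ζ ≠ 0 := by rw [← hΨψ ζ]; exact hz
    have := hgr ζ hψζ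
    rw [← hGg ζ, ← hRr ζ] at this
    exact this
  have heq : Set.EqOn (fun z => G z * R z) (fun _ => (1 : ℂ)) (ball (0 : ℂ) 1) :=
    AnalyticOnNhd.eqOn_of_preconnected_of_eventuallyEq
      ((hG.mul hR).analyticOnNhd isOpen_ball)
      ((differentiableOn_const 1).analyticOnNhd isOpen_ball)
      (convex_ball (0 : ℂ) 1).isPreconnected hz₀b hev
  refine ⟨g, ⟨hg, r, hr, fun z => ?_⟩, hTψ⟩
  have := heq z.2
  rw [← hGg z, ← hRr z]
  exact this
end

section
/- Let ψ ∈ H^∞ and φ ∈ Aut(𝔻) be such that ψ ∘ φ = ψ·g for some invertible element g of H^∞ (i.e., g ∈ H^∞ and there exists h ∈ H^∞ with g·h ≡ 1 on 𝔻). Then the composition operator C_φ, given by C_φ f = f ∘ φ, is a well-defined algebra automorphism (bijective, ℂ-linear, multiplicative self-map) of ψH^∞. -/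
open Complex Metric Set

local notation "𝔻" => Complex.UnitDisc

namespace Stmt9Aux

open Filter Topology

lemma coe_mem_ball (z : 𝔻) : (z : ℂ) ∈ Metric.ball (0 : ℂ) 1 :=
  mem_ball_zero_iff.2 (by simpa using z.norm_lt_one)

/-- turn a point of the ball into a point of the disc -/
noncomputable def mkD (x : ℂ) (hx : x ∈ Metric.ball (0 : ℂ) 1) : 𝔻 :=
  Complex.UnitDisc.mk x (by simpa using mem_ball_zero_iff.1 hx)

@[simp] lemma coe_mkD (x : ℂ) (hx : x ∈ Metric.ball (0 : ℂ) 1) : ((mkD x hx : 𝔻) : ℂ) = x :=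
  Complex.UnitDisc.coe_mk _ _

@[simp] lemma mkD_coe (z : 𝔻) (h : ((z : ℂ)) ∈ Metric.ball (0 : ℂ) 1 := coe_mem_ball z) :
    mkD (z : ℂ) h = z := Subtype.ext (by simp [mkD, Complex.UnitDisc.coe_mk])

lemma memHinf_mul {f g : 𝔻 → ℂ} (hf : MemHinf f) (hg : MemHinf g) :
    MemHinf (fun z => f z * g z) := by
  obtain ⟨⟨F, hFd, hFe⟩, M, hM⟩ := hf
  obtain ⟨⟨G, hGd, hGe⟩, N, hN⟩ := hg
  refine ⟨⟨fun x => F x * G x, hFd.mul hGd, fun z => by simp [hFe z, hGe z]⟩,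
    max M 0 * max N 0, fun z => ?_⟩
  have h1 : ‖f z‖ ≤ max M 0 := le_trans (hM z) (le_max_left _ _)
  have h2 : ‖g z‖ ≤ max N 0 := le_trans (hN z) (le_max_left _ _)
  calc ‖f z * g z‖ = ‖f z‖ * ‖g z‖ := norm_mul _ _
    _ ≤ max M 0 * max N 0 :=
      mul_le_mul h1 h2 (norm_nonneg _) (le_max_right _ _)

lemma memHinf_comp {f : 𝔻 → ℂ} {χ : 𝔻 → 𝔻} (hf : MemHinf f)
    (hχ : ∃ C : ℂ → ℂ, DifferentiableOn ℂ C (Metric.ball 0 1) ∧ ∀ z : 𝔻, C ↑z = ↑(χ z)) :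
    MemHinf (fun z => f (χ z)) := by
  obtain ⟨⟨F, hFd, hFe⟩, M, hM⟩ := hf
  obtain ⟨C, hCd, hCe⟩ := hχ
  have hmaps : Set.MapsTo C (Metric.ball 0 1) (Metric.ball 0 1) := by
    intro x hx
    have : C x = ↑(χ (mkD x hx)) := by
      conv_lhs => rw [← coe_mkD x hx]
      exact hCe (mkD x hx)
    rw [this]; exact coe_mem_ball _
  refine ⟨⟨F ∘ C, hFd.comp hCd hmaps, fun z => ?_⟩, M, fun z => hM (χ z)⟩
  simp only [Function.comp_apply, hCe z, hFe (χ z)]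

/-- Key lemma: the inverse of a bijective holomorphic self-map of the disc is holomorphic. -/
lemma inv_holo (φ : 𝔻 → 𝔻) (F : ℂ → ℂ) (hFd : DifferentiableOn ℂ F (Metric.ball 0 1))
    (hFe : ∀ z : 𝔻, F ↑z = ↑(φ z)) (hbij : Function.Bijective φ) :
    ∃ G : ℂ → ℂ, DifferentiableOn ℂ G (Metric.ball 0 1) ∧
      ∀ z : 𝔻, G ↑z = ↑((Equiv.ofBijective φ hbij).symm z) := by
  classical
  set e := Equiv.ofBijective φ hbij with he
  set G : ℂ → ℂ := fun w =>
    if h : w ∈ Metric.ball (0 : ℂ) 1 then ↑(e.symm (mkD w h)) else 0 with hG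
  have hGe : ∀ z : 𝔻, G ↑z = ↑(e.symm z) := by
    intro z
    simp only [hG, dif_pos (coe_mem_ball z), mkD_coe]
  have hGmem : ∀ w (hw : w ∈ Metric.ball (0 : ℂ) 1), G w ∈ Metric.ball (0 : ℂ) 1 := by
    intro w hw
    simp only [hG, dif_pos hw]
    exact coe_mem_ball _
  have hFG : ∀ w ∈ Metric.ball (0 : ℂ) 1, F (G w) = w := by
    intro w hw
    simp only [hG, dif_pos hw]
    rw [hFe (e.symm (mkD w hw))]
    have : φ (e.symm (mkD w hw)) = mkD w hw := e.apply_symm_apply (mkD w hw)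
    rw [this, coe_mkD]
  have hGF : ∀ w ∈ Metric.ball (0 : ℂ) 1, G (F w) = w := by
    intro w hw
    have h1 : F w = ↑(φ (mkD w hw)) := by
      conv_lhs => rw [← coe_mkD w hw]; exact (hFe (mkD w hw))
    rw [h1, hGe (φ (mkD w hw))]
    have : e.symm (φ (mkD w hw)) = mkD w hw := e.symm_apply_apply (mkD w hw)
    rw [this, coe_mkD]
  have hFan : AnalyticOnNhd ℂ F (Metric.ball 0 1) := hFd.analyticOnNhd isOpen_ball
  -- F is not locally constant
  have hne : ∀ ζ ∈ Metric.ball (0 : ℂ) 1, ¬ (∀ᶠ z in 𝓝 ζ, F z = F ζ) := by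
    intro ζ hζ hconst
    have hmem : ({z | F z = F ζ} ∩ Metric.ball 0 1) ∩ {ζ}ᶜ ∈ 𝓝[≠] ζ :=
      inter_mem (mem_nhdsWithin_of_mem_nhds
        (inter_mem hconst (isOpen_ball.mem_nhds hζ))) self_mem_nhdsWithin
    obtain ⟨z₁, ⟨hz₁F, hz₁b⟩, hz₁ne⟩ := Filter.nonempty_of_mem hmem
    have hφeq : φ (mkD z₁ hz₁b) = φ (mkD ζ hζ) := by
      apply Complex.UnitDisc.coe_injective
      rw [← hFe, ← hFe, coe_mkD, coe_mkD]
      exact hz₁F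
    have := hbij.1 hφeq
    apply hz₁ne
    have := congrArg (fun z : 𝔻 => (z : ℂ)) this
    simpa using this
  -- continuity of G on the ball
  have hGc : ∀ w ∈ Metric.ball (0 : ℂ) 1, ContinuousAt G w := by
    intro w hw
    have hζ : G w ∈ Metric.ball (0 : ℂ) 1 := hGmem w hw
    have hwF : F (G w) = w := hFG w hw
    rcases (hFan (G w) hζ).eventually_constant_or_nhds_le_map_nhds with hconst | hopen
    · exact absurd hconst (hne _ hζ)
    · rw [hwF] at hopen
      rw [ContinuousAt]
      intro V hV
      have himg : F '' (V ∩ Metric.ball 0 1) ∈ map F (𝓝 (G w)) :=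
        image_mem_map (inter_mem hV (isOpen_ball.mem_nhds hζ))
      have : F '' (V ∩ Metric.ball 0 1) ∈ 𝓝 w := hopen himg
      apply mem_of_superset this
      rintro _ ⟨z, ⟨hzV, hzb⟩, rfl⟩
      show G (F z) ∈ V
      rw [hGF z hzb]; exact hzV
  -- derivative of F has isolated zeros
  have hdne : ∀ ζ ∈ Metric.ball (0 : ℂ) 1, ∀ᶠ z in 𝓝[≠] ζ, deriv F z ≠ 0 := by
    intro ζ hζ
    rcases (hFan.deriv ζ hζ).eventually_eq_zero_or_eventually_ne_zero with hzero | hok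
    · exfalso
      obtain ⟨r, hr0, hrsub⟩ := Metric.mem_nhds_iff.1
        (inter_mem hzero (isOpen_ball.mem_nhds hζ))
      apply hne ζ hζ
      have hconst : ∀ z ∈ Metric.ball ζ r, F z = F ζ := by
        intro z hz
        have hdiff : DifferentiableOn ℂ F (Metric.ball ζ r) :=
          hFd.mono (fun x hx => (hrsub hx).2)
        refine (convex_ball ζ r).is_const_of_fderivWithin_eq_zero hdiff ?_ hz
          (Metric.mem_ball_self hr0)
        intro x hx
        rw [fderivWithin_of_isOpen isOpen_ball hx]
        apply ContinuousLinearMap.ext_ring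
        show deriv F x = (0 : ℂ →L[ℂ] ℂ) 1
        rw [ContinuousLinearMap.zero_apply]
        exact (hrsub hx).1
      filter_upwards [Metric.ball_mem_nhds ζ hr0] with z hz using hconst z hz
    · exact hok
  -- G is differentiable on the ball
  have hGan : ∀ w ∈ Metric.ball (0 : ℂ) 1, AnalyticAt ℂ G w := by
    intro w hw
    have hζ : G w ∈ Metric.ball (0 : ℂ) 1 := hGmem w hw
    apply Complex.analyticAt_of_differentiable_on_punctured_nhds_of_continuousAt _ (hGc w hw)
    -- G maps punctured nbhd of w into punctured nbhd of G w
    have hGinj : ∀ y ∈ Metric.ball (0 : ℂ) 1, G y = G w → y = w := by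
      intro y hy hGy
      rw [← hFG y hy, ← hFG w hw, hGy]
    have htend : Tendsto G (𝓝[≠] w) (𝓝[≠] (G w)) := by
      rw [tendsto_nhdsWithin_iff]
      constructor
      · exact ((hGc w hw).tendsto).mono_left nhdsWithin_le_nhds
      · filter_upwards [mem_nhdsWithin_of_mem_nhds (isOpen_ball.mem_nhds hw),
          self_mem_nhdsWithin] with y hy hyne
        exact fun hGy => hyne (hGinj y hy hGy)
    filter_upwards [htend.eventually (hdne (G w) hζ),
      mem_nhdsWithin_of_mem_nhds (isOpen_ball.mem_nhds hw)] with y hdy hy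
    have hGyb : G y ∈ Metric.ball (0 : ℂ) 1 := hGmem y hy
    have hFder : HasDerivAt F (deriv F (G y)) (G y) :=
      (hFd.differentiableAt (isOpen_ball.mem_nhds hGyb)).hasDerivAt
    have := HasDerivAt.of_local_left_inverse (hGc y hy) hFder hdy
      (by filter_upwards [isOpen_ball.mem_nhds hy] with x hx using hFG x hx)
    exact this.differentiableAt
  exact ⟨G, fun w hw => ((hGan w hw).differentiableAt).differentiableWithinAt, hGe⟩

end Stmt9Aux


/-- if `ψ ∈ H^∞`, `φ ∈ Aut(𝔻)` and `ψ ∘ φ = ψ · g` for some invertible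
element `g` of `H^∞`, then `C_φ` is a well-defined algebra automorphism of `ψ H^∞`. -/
theorem stmt_9 (ψ : 𝔻 → ℂ) (hψ : MemHinf ψ) (φ : 𝔻 → 𝔻) (hφ : IsDiscAut φ)
    (g : 𝔻 → ℂ) (hg : InvHinf g) (heq : ∀ z, ψ (φ z) = ψ z * g z) :
    CompAutOn (psiH ψ) φ := by
  obtain ⟨⟨F, hFd, hFe⟩, hbij⟩ := hφ
  have hφext : ∃ C : ℂ → ℂ, DifferentiableOn ℂ C (Metric.ball 0 1) ∧
      ∀ z : 𝔻, C ↑z = ↑(φ z) := ⟨F, hFd, hFe⟩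
  obtain ⟨G, hGd, hGe⟩ := Stmt9Aux.inv_holo φ F hFd hFe hbij
  set e := Equiv.ofBijective φ hbij with he
  obtain ⟨k, hk, hgk⟩ := hg.2
  refine ⟨?_, ?_, ?_⟩
  · -- maps psiH into psiH
    rintro f ⟨h, hh, rfl⟩
    refine ⟨fun z => g z * h (φ z),
      Stmt9Aux.memHinf_mul hg.1 (Stmt9Aux.memHinf_comp hh hφext), ?_⟩
    funext z
    simp only [Function.comp_apply]
    rw [heq z]; ring
  · -- injectivity
    intro f hf f' hf' hcomp
    funext w
    obtain ⟨z, rfl⟩ := hbij.2 w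
    exact congrFun hcomp z
  · -- surjectivity
    rintro f ⟨h, hh, rfl⟩
    have hGext : ∃ C : ℂ → ℂ, DifferentiableOn ℂ C (Metric.ball 0 1) ∧
        ∀ z : 𝔻, C ↑z = ↑(e.symm z) := ⟨G, hGd, hGe⟩
    refine ⟨fun z => ψ z * (k (e.symm z) * h (e.symm z)),
      ⟨fun z => k (e.symm z) * h (e.symm z),
        Stmt9Aux.memHinf_mul (Stmt9Aux.memHinf_comp hk hGext)
          (Stmt9Aux.memHinf_comp hh hGext), rfl⟩, ?_⟩
    funext z
    simp only [Function.comp_apply]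
    have hsymm : e.symm (φ z) = z := Equiv.ofBijective_symm_apply_apply φ hbij z
    rw [hsymm, heq z]
    have := hgk z
    calc ψ z * g z * (k z * h z) = ψ z * h z * (g z * k z) := by ring
      _ = ψ z * h z := by rw [this, mul_one]
end
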